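/- Let D = (I,u) be an Arakelov divisor of degree 0 on a number field F of degree n. Then every nonzero f ∈ I satisfies ‖f‖_D ≥ √n, and there exists a nonzero f ∈ I with ‖f‖_D ≤ √n·(2/π)^{r₂/n}·|Δ_F|^{1/(2n)}. -/

import Mathlib

open NumberField Module FractionalIdeal
open scoped nonZeroDivisors

namespace ArakelovAux

open NumberField.InfinitePlace NumberField.mixedEmbedding MeasureTheory MeasureTheory.Measure
  Submodule ZSpan Metric
open scoped NNReal ENNReal Classical

variable (K : Type*) [Field K] [NumberField K] (f : InfinitePlace K → ℝ≥0)

/-- The closed box. -/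
noncomputable abbrev closedBox : Set (mixedSpace K) :=
  (Set.univ.pi fun w : { w : InfinitePlace K // IsReal w } => closedBall 0 (f w)) ×ˢ
  (Set.univ.pi fun w : { w : InfinitePlace K // IsComplex w } => closedBall 0 (f w))

theorem closedBox_mem {x : K} :
    mixedEmbedding K x ∈ closedBox K f ↔ ∀ w : InfinitePlace K, w x ≤ f w := by
  simp_rw [closedBox, mixedEmbedding, RingHom.prod_apply, Set.mem_prod, Set.mem_pi, Set.mem_univ,
    forall_true_left, mem_closedBall_zero_iff, Pi.ringHom_apply, ← Complex.norm_real,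
    embedding_of_isReal_apply, Subtype.forall, ← forall₂_or_left, ← not_isReal_iff_isComplex, em,
    forall_true_left, norm_embedding_eq]

theorem closedBox_neg_mem (x : mixedSpace K) (hx : x ∈ closedBox K f) :
    -x ∈ closedBox K f := by
  simp only [Set.mem_prod, Prod.fst_neg, Set.mem_pi, Set.mem_univ, Pi.neg_apply,
    mem_closedBall_zero_iff, norm_neg, forall_true_left, Subtype.forall, Prod.snd_neg] at hx ⊢
  exact hx

theorem closedBox_convex : Convex ℝ (closedBox K f) :=
  Convex.prod (convex_pi (fun _ _ => convex_closedBall _ _))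
    (convex_pi (fun _ _ => convex_closedBall _ _))

theorem closedBox_compact : IsCompact (closedBox K f) :=
  (isCompact_univ_pi fun _ => isCompact_closedBall _ _).prod
    (isCompact_univ_pi fun _ => isCompact_closedBall _ _)

theorem convexBodyLT_subset_closedBox : convexBodyLT K f ⊆ closedBox K f :=
  Set.prod_mono (Set.pi_mono fun _ _ => ball_subset_closedBall)
    (Set.pi_mono fun _ _ => ball_subset_closedBall)

theorem exists_ne_zero_mem_ideal_le (I : (FractionalIdeal (𝓞 K)⁰ K)ˣ)
    (h : minkowskiBound K I ≤ volume (closedBox K f)) :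
    ∃ a ∈ (I : FractionalIdeal (𝓞 K)⁰ K), a ≠ 0 ∧ ∀ w : InfinitePlace K, w a ≤ f w := by
  have h_fund := ZSpan.isAddFundamentalDomain' (fractionalIdealLatticeBasis K I) volume
  have : Countable (span ℤ (Set.range (fractionalIdealLatticeBasis K I))).toAddSubgroup := by
    change Countable (span ℤ (Set.range (fractionalIdealLatticeBasis K I)))
    infer_instance
  obtain ⟨⟨x, hx⟩, h_nz, h_mem⟩ := exists_ne_zero_mem_lattice_of_measure_mul_two_pow_le_measure
    h_fund (fun x hx => closedBox_neg_mem K f x hx) (closedBox_convex K f)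
    (closedBox_compact K f) h
  rw [mem_toAddSubgroup, mem_span_fractionalIdealLatticeBasis] at hx
  obtain ⟨a, ha, rfl⟩ := hx
  exact ⟨a, ha, by simpa using h_nz, (closedBox_mem K f).mp h_mem⟩

theorem absNorm_le_of_mem {I : FractionalIdeal (𝓞 K)⁰ K} (hI : I ≠ 0) {f : K}
    (hf : f ∈ I) (hf0 : f ≠ 0) : absNorm I ≤ |Algebra.norm ℚ f| := by
  have hspan : spanSingleton (𝓞 K)⁰ f ≤ I := by
    rwa [spanSingleton_le_iff_mem]
  have hJle : I⁻¹ * spanSingleton (𝓞 K)⁰ f ≤ 1 := by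
    calc I⁻¹ * spanSingleton (𝓞 K)⁰ f ≤ I⁻¹ * I := by gcongr
    _ = 1 := by rw [inv_mul_cancel₀ hI]
  obtain ⟨J₀, hJ₀eq⟩ := le_one_iff_exists_coeIdeal.mp hJle
  have hJ0 : (J₀ : FractionalIdeal (𝓞 K)⁰ K) ≠ 0 := by
    rw [hJ₀eq]
    exact mul_ne_zero (inv_ne_zero hI) (by rwa [ne_eq, spanSingleton_eq_zero_iff])
  have h1 : (1 : ℚ) ≤ absNorm (J₀ : FractionalIdeal (𝓞 K)⁰ K) := by
    rw [coeIdeal_absNorm]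
    have hb : J₀ ≠ ⊥ := by simpa using hJ0
    exact_mod_cast Nat.one_le_iff_ne_zero.mpr (fun h => hb (Ideal.absNorm_eq_zero_iff.mp h))
  have key : spanSingleton (𝓞 K)⁰ f = I * (J₀ : FractionalIdeal (𝓞 K)⁰ K) := by
    rw [hJ₀eq, ← mul_assoc, mul_inv_cancel₀ hI, one_mul]
  have habs := absNorm_span_singleton (𝓞 K) f
  rw [key, _root_.map_mul] at habs
  rw [← habs]
  nlinarith [absNorm_nonneg I, absNorm_nonneg (J₀ : FractionalIdeal (𝓞 K)⁰ K)]

theorem part1 (I : FractionalIdeal (𝓞 K)⁰ K) (hI : I ≠ 0)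
    (u : InfinitePlace K → ℝ) (hu : ∀ w, 0 < u w)
    (hdeg : (∏ w : InfinitePlace K, u w ^ w.mult) * (absNorm I : ℝ) = 1)
    {f : K} (hf : f ∈ I) (hf0 : f ≠ 0) :
    Real.sqrt (finrank ℚ K) ≤
      Real.sqrt (∑ w : InfinitePlace K, (w.mult : ℝ) * (u w * w f) ^ 2) := by
  have hn : 0 < (finrank ℚ K : ℝ) := Nat.cast_pos.mpr finrank_pos
  have hup : (0:ℝ) < ∏ w : InfinitePlace K, u w ^ w.mult :=
    Finset.prod_pos fun w _ => pow_pos (hu w) _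
  have hNf : (absNorm I : ℝ) ≤ |(Algebra.norm ℚ f : ℝ)| := by
    have := absNorm_le_of_mem K hI hf hf0
    rw [show |(Algebra.norm ℚ f : ℝ)| = ((|Algebra.norm ℚ f| : ℚ) : ℝ) by push_cast; ring]
    exact_mod_cast this
  have hprod1 : 1 ≤ ∏ w : InfinitePlace K, (u w * w f) ^ w.mult := by
    have he : ∏ w : InfinitePlace K, (u w * w f) ^ w.mult =
        (∏ w : InfinitePlace K, u w ^ w.mult) * ∏ w : InfinitePlace K, (w f) ^ w.mult := by
      simp_rw [mul_pow, Finset.prod_mul_distrib]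
    rw [he, NumberField.InfinitePlace.prod_eq_abs_norm]
    calc (1:ℝ) = (∏ w : InfinitePlace K, u w ^ w.mult) * (absNorm I : ℝ) := hdeg.symm
    _ ≤ _ := by
      refine mul_le_mul_of_nonneg_left ?_ hup.le
      exact_mod_cast hNf
  have hsum_mult : ∑ w : InfinitePlace K, (w.mult:ℝ) = (finrank ℚ K : ℝ) := by
    rw [← Nat.cast_sum, sum_mult_eq]
  have amgm := Real.geom_mean_le_arith_mean Finset.univ (fun w => (w.mult:ℝ))
    (fun w => (u w * w f)^2) (fun _ _ => Nat.cast_nonneg _)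
    (by rw [hsum_mult]; exact hn) (fun _ _ => sq_nonneg _)
  simp only [hsum_mult] at amgm
  have hL : (1:ℝ) ≤ (∑ w : InfinitePlace K, (w.mult:ℝ) * (u w * w f)^2) / (finrank ℚ K) := by
    refine le_trans ?_ amgm
    have he2 : ∏ w : InfinitePlace K, ((u w * w f)^2) ^ (w.mult:ℝ) =
        (∏ w : InfinitePlace K, (u w * w f) ^ w.mult)^2 := by
      simp_rw [Real.rpow_natCast, ← pow_mul, mul_comm 2, pow_mul]
      rw [Finset.prod_pow]
    rw [he2]
    calc (1:ℝ) = 1 ^ ((finrank ℚ K : ℝ))⁻¹ := (Real.one_rpow _).symm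
    _ ≤ _ := Real.rpow_le_rpow zero_le_one (one_le_pow₀ hprod1) (inv_nonneg.mpr hn.le)
  have : (finrank ℚ K : ℝ) ≤ ∑ w : InfinitePlace K, (w.mult:ℝ) * (u w * w f)^2 :=
    (one_le_div hn).mp hL
  exact Real.sqrt_le_sqrt this

theorem part2 (I : FractionalIdeal (𝓞 K)⁰ K) (hI : I ≠ 0)
    (u : InfinitePlace K → ℝ) (hu : ∀ w, 0 < u w)
    (hdeg : (∏ w : InfinitePlace K, u w ^ w.mult) * (absNorm I : ℝ) = 1) :
    ∃ f : K, f ∈ I ∧ f ≠ 0 ∧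
      Real.sqrt (∑ w : InfinitePlace K, (w.mult : ℝ) * (u w * w f) ^ 2) ≤
        Real.sqrt (finrank ℚ K) *
          (2 / Real.pi) ^ ((nrComplexPlaces K : ℝ) / (finrank ℚ K)) *
            |(discr K : ℝ)| ^ ((1 : ℝ) / (2 * finrank ℚ K)) := by
  have hn : 0 < (finrank ℚ K : ℝ) := Nat.cast_pos.mpr finrank_pos
  have hn0 : (finrank ℚ K : ℝ) ≠ 0 := hn.ne'
  have hNI : 0 < (absNorm I : ℝ) := by
    rcases lt_or_eq_of_le (absNorm_nonneg I) with h | h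
    · exact_mod_cast h
    · exact absurd (absNorm_eq_zero_iff.mp (by exact_mod_cast h.symm)) hI
  -- the constant c
  set c : ℝ := (2 / Real.pi) ^ ((nrComplexPlaces K : ℝ) / (finrank ℚ K)) *
      |(discr K : ℝ)| ^ ((1 : ℝ) / (2 * finrank ℚ K)) with hc_def
  have hπ : (0:ℝ) < Real.pi := Real.pi_pos
  have hc0 : 0 ≤ c := by positivity
  have hc_pow : c ^ (finrank ℚ K) =
      (2 / Real.pi) ^ (nrComplexPlaces K) * Real.sqrt |(discr K : ℝ)| := by
    rw [hc_def, mul_pow, ← Real.rpow_natCast ((2/Real.pi) ^ ((nrComplexPlaces K : ℝ) / _)),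
      ← Real.rpow_natCast (|(discr K : ℝ)| ^ ((1:ℝ) / _)), ← Real.rpow_mul (by positivity),
      ← Real.rpow_mul (abs_nonneg _), div_mul_cancel₀ _ hn0,
      show (1:ℝ) / (2 * finrank ℚ K) * (finrank ℚ K) = 1/2 by field_simp,
      Real.rpow_natCast, Real.sqrt_eq_rpow, one_div]
  set g : InfinitePlace K → ℝ≥0 := fun w => (c / u w).toNNReal with hg_def
  have hgr : ∀ w, (g w : ℝ) = c / u w := fun w =>
    Real.coe_toNNReal _ (div_nonneg hc0 (hu w).le)
  have hup : (0:ℝ) < ∏ w : InfinitePlace K, u w ^ w.mult :=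
    Finset.prod_pos fun w _ => pow_pos (hu w) _
  have hprod_g : ∏ w : InfinitePlace K, ((g w : ℝ)) ^ w.mult
      = c ^ (finrank ℚ K) * (absNorm I : ℝ) := by
    have h1 : ∏ w : InfinitePlace K, ((g w : ℝ)) ^ w.mult =
        (∏ w : InfinitePlace K, (c:ℝ) ^ w.mult) / ∏ w : InfinitePlace K, u w ^ w.mult := by
      simp_rw [hgr, div_pow, Finset.prod_div_distrib]
    rw [h1, Finset.prod_pow_eq_pow_sum, sum_mult_eq, div_eq_iff hup.ne', mul_assoc,
      mul_comm ((absNorm I : ℝ)), hdeg, mul_one]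
  have hvol : minkowskiBound K (Units.mk0 I hI) ≤ volume (closedBox K g) := by
    refine le_trans ?_ (measure_mono (convexBodyLT_subset_closedBox K g))
    rw [convexBodyLT_volume]
    simp_rw [ENNReal.coe_finset_prod, ENNReal.coe_pow]
    have hfin1 : minkowskiBound K (Units.mk0 I hI) ≠ ⊤ := (minkowskiBound_lt_top K _).ne
    have hfin2 : ((convexBodyLTFactor K : ℝ≥0∞) *
        ∏ w : InfinitePlace K, (g w : ℝ≥0∞) ^ (mult w)) ≠ ⊤ :=
      ENNReal.mul_ne_top ENNReal.coe_ne_top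
        (ENNReal.prod_lt_top (fun w _ => ENNReal.pow_lt_top ENNReal.coe_lt_top)).ne
    rw [← ENNReal.toReal_le_toReal hfin1 hfin2]
    rw [minkowskiBound, volume_fundamentalDomain_fractionalIdealLatticeBasis,
      volume_fundamentalDomain_latticeBasis]
    simp_rw [ENNReal.toReal_mul, ENNReal.toReal_pow, ENNReal.toReal_inv, ENNReal.toReal_ofNat,
      ENNReal.coe_toReal, mixedEmbedding.finrank, ENNReal.toReal_prod,
      ENNReal.toReal_ofReal (Rat.cast_nonneg.mpr (absNorm_nonneg _)),
      Real.coe_sqrt, coe_nnnorm, Int.norm_eq_abs, Units.val_mk0]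
    refine le_of_eq ?_
    simp_rw [ENNReal.toReal_pow, ENNReal.coe_toReal, hprod_g, hc_pow]
    rw [convexBodyLTFactor]
    push_cast [NNReal.coe_real_pi]
    rw [← card_add_two_mul_card_eq_rank, pow_add, pow_mul]
    field_simp
    rw [show ((2:ℝ)^2)^nrComplexPlaces K = 2^nrComplexPlaces K * 2^nrComplexPlaces K by
      rw [← pow_mul, two_mul, pow_add]]
    simp only [one_div, inv_pow]
    field_simp
    have hpr : Real.pi ^ nrComplexPlaces K * Real.pi⁻¹ ^ nrComplexPlaces K = 1 := by
      rw [← mul_pow, mul_inv_cancel₀ hπ.ne', one_pow]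
    linear_combination (-(Real.sqrt |(discr K : ℝ)| * 2 ^ nrComplexPlaces K)) * hpr
  obtain ⟨a, ha_mem, ha0, ha_le⟩ := exists_ne_zero_mem_ideal_le K g (Units.mk0 I hI) hvol
  have h1 : ∀ w : InfinitePlace K, u w * w a ≤ c := by
    intro w
    have h := ha_le w
    rw [hgr w] at h
    calc u w * w a ≤ u w * (c / u w) := mul_le_mul_of_nonneg_left h (hu w).le
    _ = c := by rw [mul_comm, div_mul_cancel₀ c (hu w).ne']
  have hsum : ∑ w : InfinitePlace K, (w.mult:ℝ) * (u w * w a)^2 ≤ (finrank ℚ K) * c^2 := by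
    calc ∑ w : InfinitePlace K, (w.mult:ℝ) * (u w * w a)^2
        ≤ ∑ w : InfinitePlace K, (w.mult:ℝ) * c^2 :=
          Finset.sum_le_sum fun w _ => mul_le_mul_of_nonneg_left
            (pow_le_pow_left₀ (mul_nonneg (hu w).le (apply_nonneg w a)) (h1 w) 2)
            (Nat.cast_nonneg _)
    _ = (finrank ℚ K) * c^2 := by
          rw [← Finset.sum_mul, ← Nat.cast_sum, sum_mult_eq]
  have hfinal : Real.sqrt (∑ w : InfinitePlace K, (w.mult:ℝ) * (u w * w a)^2)
      ≤ Real.sqrt (finrank ℚ K) * c := by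
    calc Real.sqrt (∑ w : InfinitePlace K, (w.mult:ℝ) * (u w * w a)^2)
        ≤ Real.sqrt ((finrank ℚ K) * c^2) := Real.sqrt_le_sqrt hsum
    _ = Real.sqrt (finrank ℚ K) * c := by
          rw [Real.sqrt_mul (Nat.cast_nonneg _), Real.sqrt_sq hc0]
  refine ⟨a, ha_mem, ha0, ?_⟩
  rw [mul_assoc, ← hc_def]
  exact hfinal

end ArakelovAux

/-- Corollary 4.5. Let `D = (I,u)` be an Arakelov divisor of
degree `0`, i.e. `N(u)·N(I) = 1`.  Then every nonzero `f ∈ I` has `‖f‖_D ≥ √n`,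
and there exists a nonzero `f ∈ I` with
`‖f‖_D ≤ √n·(2/π)^{r₂/n}·|Δ_F|^{1/(2n)}`. -/
theorem arakelov_degree_zero_bounds (F : Type*) [Field F] [NumberField F]
    (I : FractionalIdeal (𝓞 F)⁰ F) (hI : I ≠ 0)
    (u : InfinitePlace F → ℝ) (hu : ∀ w, 0 < u w)
    (hdeg : (∏ w : InfinitePlace F, u w ^ w.mult) * (absNorm I : ℝ) = 1) :
    (∀ f : F, f ∈ I → f ≠ 0 →
        Real.sqrt (∑ w : InfinitePlace F, (w.mult : ℝ) * (u w * w f) ^ 2) ≥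
          Real.sqrt (finrank ℚ F)) ∧
      ∃ f : F, f ∈ I ∧ f ≠ 0 ∧
        Real.sqrt (∑ w : InfinitePlace F, (w.mult : ℝ) * (u w * w f) ^ 2) ≤
          Real.sqrt (finrank ℚ F) *
            (2 / Real.pi) ^ ((InfinitePlace.nrComplexPlaces F : ℝ) / (finrank ℚ F)) *
              |(discr F : ℝ)| ^ ((1 : ℝ) / (2 * finrank ℚ F)) :=
  ⟨fun _ hf hf0 => ArakelovAux.part1 F I hI u hu hdeg hf hf0,
    ArakelovAux.part2 F I hI u hu hdeg⟩
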